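/- Let ρ : Γ → Γ' be an injective homomorphism of groups, and suppose that rk(Γ) = rk(Γ') = n < ∞. Let G be a free abelian subgroup of Γ of rank n, and let g ∈ G. Then rk(Z(C_{Γ'}(ρ(g)))) ≤ rk(Z(C_Γ(g))); that is, for every natural number k, if the center of the centralizer of ρ(g) in Γ' contains a free abelian subgroup of rank k, then the center of the centralizer of g in Γ contains a free abelian subgroup of rank k. -/

import Mathlib

/-- A group `H` contains a free abelian subgroup of rank `k` iff there is an injective
homomorphism from `ℤ^k` into `H`. -/
def HasFreeAbelianSubgroupOfRank (H : Type*) [Group H] (k : ℕ) : Prop :=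
  ∃ f : Multiplicative (Fin k → ℤ) →* H, Function.Injective f

/-- `rk(H) = n` : `H` contains a free abelian subgroup of rank `n` but none of rank `n+1`. -/
def RankEq (H : Type*) [Group H] (n : ℕ) : Prop :=
  HasFreeAbelianSubgroupOfRank H n ∧ ¬ HasFreeAbelianSubgroupOfRank H (n + 1)

open Multiplicative
open scoped IsMulCommutative

lemma ofAdd_eq_prod {k : ℕ} (c : Fin k → ℤ) :
    (ofAdd c : Multiplicative (Fin k → ℤ)) =
      ∏ i, (ofAdd (Pi.single i (1 : ℤ))) ^ (c i) := by
  calc ofAdd c = ofAdd (∑ i, Pi.single i (c i)) := by rw [Finset.univ_sum_single]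
    _ = ∏ i, ofAdd (Pi.single i (c i)) := ofAdd_sum _ _
    _ = ∏ i, ofAdd (Pi.single i (1:ℤ)) ^ (c i) := by
        refine Finset.prod_congr rfl fun i _ => ?_
        rw [← ofAdd_zsmul]
        congr 1
        rw [← Pi.single_smul, smul_eq_mul, mul_one]

lemma multPi_hom_ext {k : ℕ} {N : Type*} [Group N]
    (F G : Multiplicative (Fin k → ℤ) →* N)
    (h : ∀ i, F (ofAdd (Pi.single i 1)) = G (ofAdd (Pi.single i 1))) :
    F = G := by
  refine MonoidHom.ext fun u => ?_
  have hu : u = ∏ i, (ofAdd (Pi.single i (1:ℤ))) ^ (toAdd u i) := by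
    conv_lhs => rw [← ofAdd_toAdd u, ofAdd_eq_prod]
  rw [hu]
  exact Subgroup.prod_mem (F.eqLocus G) (fun i _ => Subgroup.zpow_mem _ (h i) _)

lemma exists_zpow_eq {H : Type*} [Group H] {n : ℕ}
    (hH : ¬ HasFreeAbelianSubgroupOfRank H (n+1))
    (j : Multiplicative (Fin n → ℤ) →* H) (hj : Function.Injective j)
    (x : H) (hcomm : ∀ b, Commute x (j b)) :
    ∃ m : ℤ, m ≠ 0 ∧ ∃ b, j b = x ^ m := by
  by_contra hcon
  push_neg at hcon
  apply hH
  have hcx : ∀ (b) (m : ℤ), x ^ m * j b = j b * x ^ m := fun b m =>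
    ((hcomm b).zpow_left m).eq
  refine ⟨MonoidHom.mk' (fun a => x ^ (toAdd a 0) *
      j (ofAdd fun i : Fin n => toAdd a i.succ)) ?_, ?_⟩
  · intro a b
    have h1 : (ofAdd fun i : Fin n => toAdd (a * b) i.succ) =
        (ofAdd fun i : Fin n => toAdd a i.succ) * (ofAdd fun i : Fin n => toAdd b i.succ) := rfl
    have h2 : toAdd (a * b) 0 = toAdd a 0 + toAdd b 0 := rfl
    show x ^ toAdd (a * b) 0 * j (ofAdd fun i : Fin n => toAdd (a * b) i.succ) =
      x ^ toAdd a 0 * j (ofAdd fun i : Fin n => toAdd a i.succ) *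
        (x ^ toAdd b 0 * j (ofAdd fun i : Fin n => toAdd b i.succ))
    rw [h1, h2, map_mul, zpow_add]
    calc x ^ toAdd a 0 * x ^ toAdd b 0 *
          (j (ofAdd fun i : Fin n => toAdd a i.succ) * j (ofAdd fun i : Fin n => toAdd b i.succ))
        = x ^ toAdd a 0 * (x ^ toAdd b 0 * j (ofAdd fun i : Fin n => toAdd a i.succ)) *
          j (ofAdd fun i : Fin n => toAdd b i.succ) := by group
      _ = x ^ toAdd a 0 * (j (ofAdd fun i : Fin n => toAdd a i.succ) * x ^ toAdd b 0) *
          j (ofAdd fun i : Fin n => toAdd b i.succ) := by rw [hcx]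
      _ = x ^ toAdd a 0 * j (ofAdd fun i : Fin n => toAdd a i.succ) *
          (x ^ toAdd b 0 * j (ofAdd fun i : Fin n => toAdd b i.succ)) := by group
  · rw [injective_iff_map_eq_one]
    intro a ha
    simp only [MonoidHom.mk'_apply] at ha
    have h0 : toAdd a 0 = 0 := by
      by_contra h0
      refine hcon (-(toAdd a 0)) (by simpa using h0)
        (ofAdd fun i : Fin n => toAdd a i.succ) ?_
      rw [zpow_neg, eq_inv_iff_mul_eq_one, ← hcx]
      exact ha
    rw [h0, zpow_zero, one_mul] at ha
    have hT : (ofAdd fun i : Fin n => toAdd a i.succ) = 1 := hj (by rw [ha, map_one])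
    have hT' : ∀ i : Fin n, toAdd a i.succ = 0 := fun i => congrFun (congrArg toAdd hT) i
    have : toAdd a = 0 := by
      funext i
      refine Fin.cases h0 (fun j => hT' j) i
    calc a = ofAdd (toAdd a) := rfl
      _ = ofAdd 0 := by rw [this]
      _ = 1 := rfl

/-- Ivanov–McCarthy.  Let `ρ : Γ → Γ'` be an injective homomorphism of
groups with `rk Γ = rk Γ' = n < ∞`.  If `G` is a free abelian subgroup of `Γ` of maximal
rank `n` and `g ∈ G`, then `rk Z(C_{Γ'}(ρ g)) ≤ rk Z(C_Γ(g))`:  for every `k`, if the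
center of the centralizer of `ρ g` in `Γ'` contains a free abelian subgroup of rank `k`,
then so does the center of the centralizer of `g` in `Γ`. -/
theorem rank_center_centralizer_le
    {Γ Γ' : Type*} [Group Γ] [Group Γ'] (ρ : Γ →* Γ') (hρ : Function.Injective ρ)
    (n : ℕ) (hΓ : RankEq Γ n) (hΓ' : RankEq Γ' n)
    (G : Subgroup Γ) (e : Multiplicative (Fin n → ℤ) ≃* G)
    (g : Γ) (hg : g ∈ G) (k : ℕ)
    (hk : HasFreeAbelianSubgroupOfRank
      (Subgroup.center (Subgroup.centralizer {ρ g} : Subgroup Γ')) k) :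
    HasFreeAbelianSubgroupOfRank
      (Subgroup.center (Subgroup.centralizer {g} : Subgroup Γ)) k := by
  set C' : Subgroup Γ' := Subgroup.centralizer {ρ g} with hC'
  obtain ⟨f, hf⟩ := hk
  -- G is commutative
  have hGcomm : ∀ u v : G, u * v = v * u := by
    intro u v
    calc u * v = e (e.symm u * e.symm v) := by
          rw [map_mul, e.apply_symm_apply, e.apply_symm_apply]
      _ = e (e.symm v * e.symm u) := by rw [mul_comm]
      _ = v * u := by rw [map_mul, e.apply_symm_apply, e.apply_symm_apply]
  have hGcomm' : ∀ u v : Γ, u ∈ G → v ∈ G → u * v = v * u := by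
    intro u v hu hv
    exact congrArg Subtype.val (hGcomm ⟨u, hu⟩ ⟨v, hv⟩)
  -- the embedding of Z^n into Γ'
  set j : Multiplicative (Fin n → ℤ) →* Γ' :=
    ρ.comp (G.subtype.comp e.toMonoidHom) with hj_def
  have hj : Function.Injective j :=
    hρ.comp (G.subtype_injective.comp e.injective)
  have hjC : ∀ b, j b ∈ C' := by
    intro b
    rw [hC', Subgroup.mem_centralizer_iff]
    intro s hs
    simp only [Set.mem_singleton_iff] at hs
    rw [hs]
    show ρ g * ρ ((e b : Γ)) = ρ ((e b : Γ)) * ρ g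
    rw [← map_mul, ← map_mul, hGcomm' g (e b) hg (e b).2]
  -- the generators' images
  set X : Fin k → (Subgroup.center C') := fun i => f (ofAdd (Pi.single i 1)) with hX_def
  have hXc : ∀ (i) (z : C'), (z : Γ') * ((X i : C') : Γ') = ((X i : C') : Γ') * z := by
    intro i z
    exact congrArg Subtype.val (Subgroup.mem_center_iff.mp (X i).2 z)
  have hcomm : ∀ i b, Commute (((X i : C') : Γ')) (j b) := by
    intro i b
    exact (hXc i ⟨j b, hjC b⟩).symm
  -- find powers landing in ρ(G)
  have key : ∀ i, ∃ m : ℤ, m ≠ 0 ∧ ∃ b, j b = (((X i : C') : Γ')) ^ m := fun i =>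
    exists_zpow_eq hΓ'.2 j hj _ (hcomm i)
  choose m hm b hb using key
  set y : Fin k → Γ := fun i => (e (b i) : Γ) with hy_def
  have hyG : ∀ i, y i ∈ G := fun i => (e (b i)).2
  have hy : ∀ i, ρ (y i) = (((X i : C') : Γ')) ^ (m i) := fun i => hb i
  -- y i is in the centralizer of g
  have hyc : ∀ i, y i ∈ Subgroup.centralizer {g} := by
    intro i
    rw [Subgroup.mem_centralizer_iff]
    intro s hs
    simp only [Set.mem_singleton_iff] at hs
    rw [hs]
    exact hGcomm' g (y i) hg (hyG i)
  -- y i is central in the centralizer of g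
  have hyz : ∀ i, (⟨y i, hyc i⟩ : Subgroup.centralizer {g}) ∈
      Subgroup.center (Subgroup.centralizer {g} : Subgroup Γ) := by
    intro i
    rw [Subgroup.mem_center_iff]
    intro z
    apply Subtype.ext
    show (z : Γ) * y i = y i * (z : Γ)
    have hzC : ρ (z : Γ) ∈ C' := by
      rw [hC', Subgroup.mem_centralizer_iff]
      intro s hs
      simp only [Set.mem_singleton_iff] at hs
      rw [hs]
      have := z.2
      rw [Subgroup.mem_centralizer_iff] at this
      have h := this g (Set.mem_singleton g)
      rw [← map_mul, ← map_mul, h]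
    apply hρ
    rw [map_mul, map_mul, hy i]
    have hcz : Commute (((X i : C') : Γ')) (ρ (z : Γ)) := (hXc i ⟨_, hzC⟩).symm
    exact ((hcz.zpow_left (m i)).eq).symm
  -- the commutative target
  set Y : Fin k → (Subgroup.center (Subgroup.centralizer {g} : Subgroup Γ)) :=
    fun i => ⟨⟨y i, hyc i⟩, hyz i⟩ with hY_def
  set φ : Multiplicative (Fin k → ℤ) →*
      (Subgroup.center (Subgroup.centralizer {g} : Subgroup Γ)) :=
    MonoidHom.mk' (fun a => ∏ i, Y i ^ (toAdd a i))
      (by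
        intro a b
        show (∏ i, Y i ^ (toAdd a i + toAdd b i)) = _
        simp [zpow_add, Finset.prod_mul_distrib]) with hφ_def
  have hφe : ∀ i, φ (ofAdd (Pi.single i 1)) = Y i := by
    intro i
    rw [hφ_def]
    simp only [MonoidHom.mk'_apply, toAdd_ofAdd]
    rw [Finset.prod_eq_single i (fun j _ hj => by rw [Pi.single_eq_of_ne hj, zpow_zero])
      (by simp), Pi.single_eq_same, zpow_one]
  -- the scaling homomorphism
  set ψ : Multiplicative (Fin k → ℤ) →* Multiplicative (Fin k → ℤ) :=
    AddMonoidHom.toMultiplicative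
      (AddMonoidHom.mk' (fun c => fun i => m i * c i)
        (by intro u v; funext i; simp [mul_add])) with hψ_def
  -- the two composite homs agree
  set F1 : Multiplicative (Fin k → ℤ) →* Γ' :=
    ρ.comp ((Subgroup.centralizer {g} : Subgroup Γ).subtype.comp
      ((Subgroup.center (Subgroup.centralizer {g} : Subgroup Γ)).subtype.comp φ)) with hF1
  set F2 : Multiplicative (Fin k → ℤ) →* Γ' :=
    (C'.subtype.comp ((Subgroup.center C').subtype.comp f)).comp ψ with hF2
  have hFeq : F1 = F2 := by
    apply multPi_hom_ext
    intro i
    rw [hF1, hF2]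
    simp only [MonoidHom.comp_apply, Subgroup.coe_subtype]
    rw [hφe i]
    have hψe : ψ (ofAdd (Pi.single i 1)) = ofAdd (Pi.single i (m i)) := by
      rw [hψ_def]
      apply toAdd.injective
      funext j
      simp only [AddMonoidHom.toMultiplicative_apply_apply, AddMonoidHom.mk'_apply, toAdd_ofAdd]
      by_cases h : j = i
      · subst h; simp
      · simp [Pi.single_eq_of_ne h]
    rw [hψe]
    have hsingle : (ofAdd (Pi.single i (m i)) : Multiplicative (Fin k → ℤ)) =
        (ofAdd (Pi.single i (1:ℤ))) ^ (m i) := by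
      rw [← ofAdd_zsmul]
      congr 1
      rw [← Pi.single_smul, smul_eq_mul, mul_one]
    rw [hsingle, map_zpow]
    show ρ (y i) = (((X i ^ m i : Subgroup.center C') : C') : Γ')
    rw [hy i]
    norm_cast
  refine ⟨φ, ?_⟩
  rw [injective_iff_map_eq_one]
  intro a ha
  have h2 : F2 a = 1 := by
    rw [← hFeq, hF1]
    simp only [MonoidHom.comp_apply, Subgroup.coe_subtype]
    rw [ha]
    simp
  have h3 : f (ψ a) = 1 := by
    rw [hF2] at h2
    simp only [MonoidHom.comp_apply, Subgroup.coe_subtype] at h2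
    exact_mod_cast h2
  have h4 : ψ a = 1 := hf (by rw [h3, map_one])
  have h5 : ∀ i, m i * toAdd a i = 0 := by
    intro i
    exact congrFun (congrArg toAdd h4) i
  have h6 : toAdd a = 0 := by
    funext i
    rcases mul_eq_zero.mp (h5 i) with h | h
    · exact absurd h (hm i)
    · exact h
  calc a = ofAdd (toAdd a) := rfl
    _ = ofAdd 0 := by rw [h6]
    _ = 1 := rfl
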